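/- Let 0 < a < 1 and b a natural number with a·b ≥ 1. Let ε > 0 and let N ≥ 1 be a natural number such that (a^N/(1−a))^{1/2} ≤ ε/2. Then the covering number of the unit ball B_W of the RKHS of the Weierstrass fractal kernel in C([−1,1]) satisfies 𝒞(ε, B_W) ≤ (1 + (4/ε)·(1/(1−a))^{1/2})^{2N}. -/

import Mathlib

open Real Metric
open scoped ENNReal

/-- The covering number of a set `A` in a metric space: the minimal number (in `ℕ∞`) of balls
of radius `ε` needed to cover `A`. -/
noncomputable def coveringNumber {X : Type*} [PseudoMetricSpace X] (ε : ℝ) (A : Set X) : ℕ∞ :=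
  sInf {n : ℕ∞ | ∃ t : Finset X, (t.card : ℕ∞) = n ∧ A ⊆ ⋃ c ∈ t, Metric.closedBall c ε}

/-- The image in `C([-1,1])` of the unit ball of the RKHS of the Weierstrass fractal kernel:
continuous functions `f(x) = ∑ₙ a^(n/2)(cₙ cos(bⁿπx) + dₙ sin(bⁿπx))` with square-summable
coefficients satisfying `∑ₙ (cₙ² + dₙ²) ≤ 1`. -/
def weierstrassBall (a : ℝ) (b : ℕ) : Set C(Set.Icc (-1 : ℝ) 1, ℝ) :=
  {f | ∃ c d : ℕ → ℝ, Summable (fun n => c n ^ 2 + d n ^ 2) ∧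
    (∑' n : ℕ, (c n ^ 2 + d n ^ 2)) ≤ 1 ∧
    ∀ x : Set.Icc (-1 : ℝ) 1, f x = ∑' n : ℕ, a ^ ((n : ℝ) / 2) *
      (c n * Real.cos ((b : ℝ) ^ n * π * (x : ℝ)) +
        d n * Real.sin ((b : ℝ) ^ n * π * (x : ℝ)))}


/-- Packing bound: a `δ`-separated set in the unit ball has at most `(1+2/δ)^dim` points. -/
lemma wcov_pack {E : Type*} [NormedAddCommGroup E] [NormedSpace ℝ E] [FiniteDimensional ℝ E]
    {δ : ℝ} (hδ : 0 < δ) (s : Finset E) (hs : ∀ c ∈ s, ‖c‖ ≤ 1)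
    (hsep : ∀ c ∈ s, ∀ d ∈ s, c ≠ d → δ ≤ dist c d) :
    (s.card : ℝ) ≤ (1 + 2 / δ) ^ (Module.finrank ℝ E) := by
  borelize E
  set n := Module.finrank ℝ E with hn
  let μ : MeasureTheory.Measure E := MeasureTheory.Measure.addHaar
  have hrpos : 0 < δ / 2 := by positivity
  have hρpos : 0 < 1 + δ / 2 := by positivity
  set r : ℝ := δ / 2 with hr
  set ρ : ℝ := 1 + δ / 2 with hρ
  set A := ⋃ c ∈ s, ball (c : E) r with hA
  have D : Set.Pairwise (s : Set E) (Function.onFun Disjoint fun c => ball (c : E) r) := by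
    rintro c hc d hd hcd
    apply ball_disjoint_ball
    have := hsep c hc d hd hcd
    linarith
  have A_subset : A ⊆ ball (0 : E) ρ := by
    refine Set.iUnion₂_subset fun x hx => ?_
    apply ball_subset_ball'
    have h2 : dist x 0 ≤ 1 := by rw [dist_zero_right]; exact hs x hx
    rw [hr, hρ]; linarith
  have I :
      (s.card : ℝ≥0∞) * ENNReal.ofReal (r ^ n) * μ (ball 0 1) ≤
        ENNReal.ofReal (ρ ^ n) * μ (ball 0 1) :=
    calc
      (s.card : ℝ≥0∞) * ENNReal.ofReal (r ^ n) * μ (ball 0 1) = μ A := by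
        rw [hA, MeasureTheory.measure_biUnion_finset D fun c _ => measurableSet_ball]
        simp only [μ.addHaar_ball_of_pos _ hrpos, ← hn]
        simp only [Finset.sum_const, nsmul_eq_mul, mul_assoc]
      _ ≤ μ (ball (0 : E) ρ) := MeasureTheory.measure_mono A_subset
      _ = ENNReal.ofReal (ρ ^ n) * μ (ball 0 1) := by
        simp only [μ.addHaar_ball_of_pos _ hρpos, ← hn]
  have J : (s.card : ℝ≥0∞) * ENNReal.ofReal (r ^ n) ≤ ENNReal.ofReal (ρ ^ n) :=
    (ENNReal.mul_le_mul_iff_left (measure_ball_pos _ _ zero_lt_one).ne'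
      MeasureTheory.measure_ball_lt_top.ne).1 I
  have K : (s.card : ℝ) * r ^ n ≤ ρ ^ n := by
    have h1 := ENNReal.toReal_le_of_le_ofReal (pow_nonneg hρpos.le _) J
    rw [ENNReal.toReal_mul, ENNReal.toReal_natCast,
      ENNReal.toReal_ofReal (pow_nonneg hrpos.le _)] at h1
    exact h1
  have hrn : 0 < r ^ n := pow_pos hrpos _
  have : (s.card : ℝ) ≤ (ρ / r) ^ n := by
    rw [div_pow, le_div_iff₀ hrn]
    exact K
  refine this.trans_eq ?_
  congr 1
  rw [hρ, hr]
  field_simp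
  ring

/-- Existence of a `δ`-net of the unit ball with at most `(1+2/δ)^dim` points. -/
lemma wcov_net {E : Type*} [NormedAddCommGroup E] [NormedSpace ℝ E] [FiniteDimensional ℝ E]
    {δ : ℝ} (hδ : 0 < δ) :
    ∃ t : Finset E, (t.card : ℝ) ≤ (1 + 2 / δ) ^ (Module.finrank ℝ E) ∧
      ∀ x : E, ‖x‖ ≤ 1 → ∃ c ∈ t, dist x c ≤ δ := by
  classical
  set S : Set ℕ := {n : ℕ | ∃ t : Finset E, (∀ c ∈ t, ‖c‖ ≤ 1) ∧
    (∀ c ∈ t, ∀ d ∈ t, c ≠ d → δ ≤ dist c d) ∧ t.card = n} with hS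
  have hb : ∀ n ∈ S, n ≤ ⌈(1 + 2 / δ) ^ (Module.finrank ℝ E)⌉₊ := by
    rintro n ⟨t, ht1, ht2, rfl⟩
    have h1 : (t.card : ℝ) ≤ (1 + 2 / δ) ^ (Module.finrank ℝ E) := wcov_pack hδ t ht1 ht2
    have h2 := h1.trans (Nat.le_ceil _)
    exact_mod_cast h2
  have hne : 0 ∈ S := ⟨∅, by simp, by simp, by simp⟩
  have hBdd : BddAbove S := ⟨_, hb⟩
  obtain ⟨t, ht1, ht2, ht3⟩ := Nat.sSup_mem ⟨0, hne⟩ hBdd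
  refine ⟨t, ?_, ?_⟩
  · exact wcov_pack hδ t ht1 ht2
  · intro x hx
    by_contra hcon
    push_neg at hcon
    have hxt : x ∉ t := by
      intro hxt
      have := hcon x hxt
      rw [dist_self] at this
      linarith
    have hmem : t.card + 1 ∈ S := by
      refine ⟨insert x t, ?_, ?_, ?_⟩
      · intro c hc
        rcases Finset.mem_insert.1 hc with rfl | hc
        · exact hx
        · exact ht1 c hc
      · intro c hc d hd hcd
        rcases Finset.mem_insert.1 hc with hcx | hc'
        · rcases Finset.mem_insert.1 hd with hdx | hd'
          · exact absurd (hcx.trans hdx.symm) hcd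
          · rw [hcx]; exact (hcon d hd').le
        · rcases Finset.mem_insert.1 hd with hdx | hd'
          · rw [hdx, dist_comm]; exact (hcon c hc').le
          · exact ht2 c hc' d hd' hcd
      · rw [Finset.card_insert_of_notMem hxt]
    have := le_csSup hBdd hmem
    rw [ht3] at this
    omega

/-- Cauchy–Schwarz for finsets with square roots. -/
lemma wcov_fin_cs {ι : Type*} (F : Finset ι) (u w : ι → ℝ) (hu : ∀ i, 0 ≤ u i)
    (hw : ∀ i, 0 ≤ w i) :
    ∑ i ∈ F, u i * w i ≤ Real.sqrt (∑ i ∈ F, u i ^ 2) * Real.sqrt (∑ i ∈ F, w i ^ 2) := by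
  have h0 : 0 ≤ ∑ i ∈ F, u i * w i :=
    Finset.sum_nonneg fun i _ => mul_nonneg (hu i) (hw i)
  have h1 := Finset.sum_mul_sq_le_sq_mul_sq F u w
  calc ∑ i ∈ F, u i * w i = Real.sqrt ((∑ i ∈ F, u i * w i) ^ 2) := (Real.sqrt_sq h0).symm
    _ ≤ Real.sqrt ((∑ i ∈ F, u i ^ 2) * ∑ i ∈ F, w i ^ 2) := Real.sqrt_le_sqrt h1
    _ = _ := Real.sqrt_mul (Finset.sum_nonneg fun i _ => sq_nonneg _) _

/-- Cauchy–Schwarz for tsums of nonnegative sequences. -/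
lemma wcov_tsum_cs (u w : ℕ → ℝ) (hu : ∀ i, 0 ≤ u i) (hw : ∀ i, 0 ≤ w i)
    (hu2 : Summable (fun i => u i ^ 2)) (hw2 : Summable (fun i => w i ^ 2)) :
    ∑' i, u i * w i ≤ Real.sqrt (∑' i, u i ^ 2) * Real.sqrt (∑' i, w i ^ 2) := by
  refine Summable.tsum_le_of_sum_le ?_ ?_
  · refine Summable.of_nonneg_of_le (fun i => mul_nonneg (hu i) (hw i))
      (fun i => ?_) ((hu2.add hw2).div_const 2)
    nlinarith [sq_nonneg (u i - w i)]
  · intro F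
    refine (wcov_fin_cs F u w hu hw).trans ?_
    exact mul_le_mul (Real.sqrt_le_sqrt (Summable.sum_le_tsum F (fun i _ => sq_nonneg _) hu2))
      (Real.sqrt_le_sqrt (Summable.sum_le_tsum F (fun i _ => sq_nonneg _) hw2))
      (Real.sqrt_nonneg _) (Real.sqrt_nonneg _)

/-- `|p cos θ + q sin θ| ≤ √(p² + q²)`. -/
lemma wcov_trig (p q θ : ℝ) : |p * Real.cos θ + q * Real.sin θ| ≤ Real.sqrt (p ^ 2 + q ^ 2) := by
  have h := Real.sin_sq_add_cos_sq θ
  refine Real.abs_le_sqrt ?_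
  nlinarith [sq_nonneg (p * Real.sin θ - q * Real.cos θ)]

lemma wcov_rpow_sq {a : ℝ} (ha0 : 0 < a) (k : ℕ) : (a ^ ((k : ℝ) / 2)) ^ 2 = a ^ k := by
  rw [← Real.rpow_natCast (a ^ ((k : ℝ) / 2)) 2, ← Real.rpow_mul ha0.le]
  norm_num

/-- Truncated Weierstrass-type function with coefficient vector `v`. -/
noncomputable def wcovF (a : ℝ) (b N : ℕ) (v : EuclideanSpace ℝ (Fin N × Bool)) :
    C(Set.Icc (-1 : ℝ) 1, ℝ) :=
  ⟨fun x => ∑ n : Fin N, a ^ (((n : ℕ) : ℝ) / 2) *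
      (v (n, false) * Real.cos ((b : ℝ) ^ (n : ℕ) * π * (x : ℝ)) +
       v (n, true) * Real.sin ((b : ℝ) ^ (n : ℕ) * π * (x : ℝ))), by
    apply continuous_finset_sum
    intro n _
    fun_prop⟩

lemma wcov_geom_le {a : ℝ} (ha0 : 0 < a) (ha1 : a < 1) (N : ℕ) :
    ∑ n ∈ Finset.range N, a ^ n ≤ (1 - a)⁻¹ := by
  rw [← tsum_geometric_of_lt_one ha0.le ha1]
  exact Summable.sum_le_tsum _ (fun i _ => by positivity) (summable_geometric_of_lt_one ha0.le ha1)

lemma wcovF_dist {a : ℝ} (ha0 : 0 < a) (ha1 : a < 1) (b N : ℕ)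
    (v w : EuclideanSpace ℝ (Fin N × Bool)) :
    dist (wcovF a b N v) (wcovF a b N w) ≤ Real.sqrt (1 - a)⁻¹ * dist v w := by
  rw [ContinuousMap.dist_le (mul_nonneg (Real.sqrt_nonneg _) dist_nonneg)]
  intro x
  rw [Real.dist_eq]
  simp only [wcovF, ContinuousMap.coe_mk]
  have hstep1 : |(∑ n : Fin N, a ^ (((n : ℕ) : ℝ) / 2) *
      (v (n, false) * Real.cos ((b : ℝ) ^ (n : ℕ) * π * (x : ℝ)) +
       v (n, true) * Real.sin ((b : ℝ) ^ (n : ℕ) * π * (x : ℝ)))) -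
      (∑ n : Fin N, a ^ (((n : ℕ) : ℝ) / 2) *
      (w (n, false) * Real.cos ((b : ℝ) ^ (n : ℕ) * π * (x : ℝ)) +
       w (n, true) * Real.sin ((b : ℝ) ^ (n : ℕ) * π * (x : ℝ))))| ≤
      ∑ n : Fin N, a ^ (((n : ℕ) : ℝ) / 2) *
        Real.sqrt ((v (n, false) - w (n, false)) ^ 2 + (v (n, true) - w (n, true)) ^ 2) := by
    rw [← Finset.sum_sub_distrib]
    refine (Finset.abs_sum_le_sum_abs _ _).trans (Finset.sum_le_sum fun n _ => ?_)
    have : a ^ (((n : ℕ) : ℝ) / 2) *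
      (v (n, false) * Real.cos ((b : ℝ) ^ (n : ℕ) * π * (x : ℝ)) +
       v (n, true) * Real.sin ((b : ℝ) ^ (n : ℕ) * π * (x : ℝ))) -
      a ^ (((n : ℕ) : ℝ) / 2) *
      (w (n, false) * Real.cos ((b : ℝ) ^ (n : ℕ) * π * (x : ℝ)) +
       w (n, true) * Real.sin ((b : ℝ) ^ (n : ℕ) * π * (x : ℝ))) =
      a ^ (((n : ℕ) : ℝ) / 2) *
      ((v (n, false) - w (n, false)) * Real.cos ((b : ℝ) ^ (n : ℕ) * π * (x : ℝ)) +
       (v (n, true) - w (n, true)) * Real.sin ((b : ℝ) ^ (n : ℕ) * π * (x : ℝ))) := by ring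
    rw [this, abs_mul, abs_of_nonneg (Real.rpow_nonneg ha0.le _)]
    exact mul_le_mul_of_nonneg_left (wcov_trig _ _ _) (Real.rpow_nonneg ha0.le _)
  refine hstep1.trans ?_
  have hcs := wcov_fin_cs (Finset.univ : Finset (Fin N))
    (fun n => a ^ (((n : ℕ) : ℝ) / 2))
    (fun n => Real.sqrt ((v (n, false) - w (n, false)) ^ 2 + (v (n, true) - w (n, true)) ^ 2))
    (fun n => Real.rpow_nonneg ha0.le _) (fun n => Real.sqrt_nonneg _)
  refine hcs.trans ?_
  have h1 : ∑ n : Fin N, (a ^ (((n : ℕ) : ℝ) / 2)) ^ 2 ≤ (1 - a)⁻¹ := by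
    have : ∀ n : Fin N, (a ^ (((n : ℕ) : ℝ) / 2)) ^ 2 = a ^ (n : ℕ) :=
      fun n => wcov_rpow_sq ha0 _
    rw [Finset.sum_congr rfl fun n _ => this n,
      Fin.sum_univ_eq_sum_range (fun k => a ^ k) N]
    exact wcov_geom_le ha0 ha1 N
  have h2 : ∑ n : Fin N,
      (Real.sqrt ((v (n, false) - w (n, false)) ^ 2 + (v (n, true) - w (n, true)) ^ 2)) ^ 2
      = dist v w ^ 2 := by
    rw [dist_eq_norm, EuclideanSpace.norm_eq, Real.sq_sqrt
      (Finset.sum_nonneg fun i _ => by positivity)]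
    rw [Fintype.sum_prod_type]
    refine Finset.sum_congr rfl fun n _ => ?_
    rw [Real.sq_sqrt (by positivity), Fintype.sum_bool]
    simp only [PiLp.sub_apply, Real.norm_eq_abs, sq_abs]
    ring
  have h2' : Real.sqrt (∑ n : Fin N,
      (Real.sqrt ((v (n, false) - w (n, false)) ^ 2 + (v (n, true) - w (n, true)) ^ 2)) ^ 2)
      = dist v w := by
    rw [h2, Real.sqrt_sq dist_nonneg]
  rw [h2']
  exact mul_le_mul_of_nonneg_right (Real.sqrt_le_sqrt h1) dist_nonneg

set_option maxHeartbeats 2000000 in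
/-- For `0 < a < 1`, `b : ℕ` with `a * b ≥ 1`, `ε > 0` and `N ≥ 1` with
`(a^N/(1-a))^(1/2) ≤ ε/2`, the covering number of the unit RKHS ball in `C([-1,1])` satisfies
`𝒞(ε, B_W) ≤ (1 + (4/ε)·(1/(1-a))^(1/2))^(2N)`. -/
theorem weierstrass_coveringNumber_upper
    (a : ℝ) (b : ℕ) (ha0 : 0 < a) (ha1 : a < 1) (hab : 1 ≤ a * b)
    (ε : ℝ) (hε : 0 < ε) (N : ℕ) (hN : 1 ≤ N)
    (hNε : Real.sqrt (a ^ N / (1 - a)) ≤ ε / 2) :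
    (coveringNumber ε (weierstrassBall a b) : ℝ≥0∞) ≤
      ENNReal.ofReal ((1 + (4 / ε) * Real.sqrt (1 / (1 - a))) ^ (2 * N)) := by
  classical
  have h1a : 0 < 1 - a := by linarith
  have hsq1a : 0 < Real.sqrt (1 - a) := Real.sqrt_pos.2 h1a
  have hgeo : Summable (fun n : ℕ => a ^ n) := summable_geometric_of_lt_one ha0.le ha1
  set δ : ℝ := ε / 2 * Real.sqrt (1 - a) with hδdef
  have hδ : 0 < δ := by positivity
  obtain ⟨t, htcard, htnet⟩ := wcov_net (E := EuclideanSpace ℝ (Fin N × Bool)) hδ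
  set T : Finset C(Set.Icc (-1 : ℝ) 1, ℝ) := t.image (wcovF a b N) with hT
  have hcover : weierstrassBall a b ⊆ ⋃ g ∈ T, Metric.closedBall g ε := by
    rintro f ⟨c, d, hsum, hle1, hrepr⟩
    obtain ⟨v, hvf, hvt⟩ : ∃ v : EuclideanSpace ℝ (Fin N × Bool),
        (∀ n : Fin N, v (n, false) = c n) ∧ (∀ n : Fin N, v (n, true) = d n) :=
      ⟨WithLp.toLp 2 (fun p : Fin N × Bool => cond p.2 (d p.1) (c p.1)), fun n => rfl, fun n => rfl⟩
    have hvnorm : ‖v‖ ≤ 1 := by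
      rw [EuclideanSpace.norm_eq]
      have hsum_eq : ∑ p : Fin N × Bool, ‖v p‖ ^ 2
          = ∑ n ∈ Finset.range N, (c n ^ 2 + d n ^ 2) := by
        rw [Fintype.sum_prod_type, ← Fin.sum_univ_eq_sum_range (fun k => c k ^ 2 + d k ^ 2) N]
        refine Finset.sum_congr rfl fun n _ => ?_
        rw [Fintype.sum_bool, hvf n, hvt n]
        simp only [Real.norm_eq_abs, sq_abs]
        ring
      rw [hsum_eq]
      have h2 : ∑ n ∈ Finset.range N, (c n ^ 2 + d n ^ 2) ≤ 1 :=
        le_trans (Summable.sum_le_tsum _ (fun i _ => by positivity) hsum) hle1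
      calc Real.sqrt (∑ n ∈ Finset.range N, (c n ^ 2 + d n ^ 2)) ≤ Real.sqrt 1 :=
            Real.sqrt_le_sqrt h2
        _ = 1 := Real.sqrt_one
    obtain ⟨w, hwt, hwd⟩ := htnet v hvnorm
    refine Set.mem_iUnion₂.2 ⟨wcovF a b N w, Finset.mem_image_of_mem _ hwt, ?_⟩
    rw [Metric.mem_closedBall]
    -- truncation bound
    have hd1 : dist f (wcovF a b N v) ≤ ε / 2 := by
      rw [ContinuousMap.dist_le (by positivity)]
      intro x
      set term : ℕ → ℝ := fun n => a ^ ((n : ℝ) / 2) *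
        (c n * Real.cos ((b : ℝ) ^ n * π * (x : ℝ)) +
          d n * Real.sin ((b : ℝ) ^ n * π * (x : ℝ))) with hterm
      set s : ℕ → ℝ := fun n => Real.sqrt (c n ^ 2 + d n ^ 2) with hs
      have hs_nonneg : ∀ n, 0 ≤ s n := fun n => Real.sqrt_nonneg _
      have hs_sq : ∀ n, s n ^ 2 = c n ^ 2 + d n ^ 2 := fun n => Real.sq_sqrt (by positivity)
      have hterm_abs : ∀ n, |term n| ≤ a ^ ((n : ℝ) / 2) * s n := by
        intro n
        rw [hterm, abs_mul, abs_of_nonneg (Real.rpow_nonneg ha0.le _)]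
        exact mul_le_mul_of_nonneg_left (wcov_trig _ _ _) (Real.rpow_nonneg ha0.le _)
      have hmaj : Summable (fun n : ℕ => a ^ ((n : ℝ) / 2) * s n) := by
        refine Summable.of_nonneg_of_le
          (fun n => mul_nonneg (Real.rpow_nonneg ha0.le _) (hs_nonneg n))
          (fun n => ?_) ((hgeo.add hsum).div_const 2)
        nlinarith [sq_nonneg (a ^ ((n : ℝ) / 2) - s n), wcov_rpow_sq ha0 n, hs_sq n]
      have habs : Summable (fun n : ℕ => |term n|) :=
        Summable.of_nonneg_of_le (fun n => abs_nonneg _) hterm_abs hmaj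
      have htermsum : Summable term := habs.of_abs
      have hFv : (wcovF a b N v) x = ∑ n ∈ Finset.range N, term n := by
        simp only [wcovF, ContinuousMap.coe_mk]
        rw [← Fin.sum_univ_eq_sum_range (fun k => term k) N]
        refine Finset.sum_congr rfl fun n _ => ?_
        rw [hvf n, hvt n]
      have key : f x - (wcovF a b N v) x = ∑' n, term (n + N) := by
        rw [hrepr x, hFv, ← Summable.sum_add_tsum_nat_add N htermsum]
        ring
      rw [Real.dist_eq, key]
      have habs_tail : Summable (fun n : ℕ => |term (n + N)|) := (summable_nat_add_iff N).2 habs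
      have hmaj_tail : Summable (fun n : ℕ => a ^ (((n + N : ℕ) : ℝ) / 2) * s (n + N)) :=
        (summable_nat_add_iff N).2 hmaj
      have hu2 : Summable (fun n : ℕ => (a ^ (((n + N : ℕ) : ℝ) / 2)) ^ 2) := by
        refine ((summable_nat_add_iff N).2 hgeo).congr fun n => ?_
        rw [wcov_rpow_sq ha0]
      have hw2 : Summable (fun n : ℕ => s (n + N) ^ 2) :=
        ((summable_nat_add_iff N).2 hsum).congr fun n => (hs_sq _).symm
      calc |∑' n, term (n + N)| ≤ ∑' n, |term (n + N)| := by
            rw [← Real.norm_eq_abs]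
            refine (norm_tsum_le_tsum_norm ?_)
            simpa [Real.norm_eq_abs] using habs_tail
        _ ≤ ∑' n, a ^ (((n + N : ℕ) : ℝ) / 2) * s (n + N) :=
            Summable.tsum_le_tsum (fun n => hterm_abs _) habs_tail hmaj_tail
        _ ≤ Real.sqrt (∑' n, (a ^ (((n + N : ℕ) : ℝ) / 2)) ^ 2) *
              Real.sqrt (∑' n, s (n + N) ^ 2) :=
            wcov_tsum_cs _ _ (fun n => Real.rpow_nonneg ha0.le _) (fun n => hs_nonneg _) hu2 hw2
        _ ≤ Real.sqrt (a ^ N / (1 - a)) * 1 := by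
            have e1 : ∑' n : ℕ, (a ^ (((n + N : ℕ) : ℝ) / 2)) ^ 2 = a ^ N / (1 - a) := by
              rw [tsum_congr fun n => wcov_rpow_sq ha0 (n + N)]
              have : (fun n : ℕ => a ^ (n + N)) = fun n : ℕ => a ^ n * a ^ N := by
                funext n; rw [pow_add]
              rw [this, tsum_mul_right, tsum_geometric_of_lt_one ha0.le ha1]
              rw [div_eq_mul_inv, mul_comm]
            have e2 : ∑' n : ℕ, s (n + N) ^ 2 ≤ 1 := by
              have h3 : ∑' n : ℕ, s (n + N) ^ 2 = ∑' n : ℕ, (c (n + N) ^ 2 + d (n + N) ^ 2) :=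
                tsum_congr fun n => hs_sq _
              rw [h3]
              have h4 := Summable.sum_add_tsum_nat_add N hsum
              have h5 : 0 ≤ ∑ i ∈ Finset.range N, (c i ^ 2 + d i ^ 2) :=
                Finset.sum_nonneg fun i _ => by positivity
              linarith [h4, hle1]
            rw [e1]
            exact mul_le_mul le_rfl
              ((Real.sqrt_le_sqrt e2).trans (by rw [Real.sqrt_one]))
              (Real.sqrt_nonneg _) (Real.sqrt_nonneg _)
        _ ≤ ε / 2 := by rw [mul_one]; exact hNε
    have hd2 : dist (wcovF a b N v) (wcovF a b N w) ≤ ε / 2 := by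
      refine (wcovF_dist ha0 ha1 b N v w).trans ?_
      calc Real.sqrt (1 - a)⁻¹ * dist v w ≤ Real.sqrt (1 - a)⁻¹ * δ :=
            mul_le_mul_of_nonneg_left hwd (Real.sqrt_nonneg _)
        _ = ε / 2 * (Real.sqrt (1 - a)⁻¹ * Real.sqrt (1 - a)) := by rw [hδdef]; ring
        _ = ε / 2 := by
            rw [← Real.sqrt_mul (by positivity) (1 - a), inv_mul_cancel₀ h1a.ne',
              Real.sqrt_one, mul_one]
    calc dist f (wcovF a b N w) ≤ dist f (wcovF a b N v) +
          dist (wcovF a b N v) (wcovF a b N w) := dist_triangle _ _ _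
      _ ≤ ε := by linarith
  -- conclusion
  have hle : coveringNumber ε (weierstrassBall a b) ≤ (T.card : ℕ∞) :=
    sInf_le ⟨T, rfl, hcover⟩
  refine le_trans (ENat.toENNReal_le.2 hle) ?_
  rw [ENat.toENNReal_coe, ← ENNReal.ofReal_natCast]
  refine ENNReal.ofReal_le_ofReal ?_
  have h1 : (T.card : ℝ) ≤ (t.card : ℝ) := by exact_mod_cast Finset.card_image_le
  refine h1.trans (htcard.trans ?_)
  have hdim : Module.finrank ℝ (EuclideanSpace ℝ (Fin N × Bool)) = 2 * N := by
    simp [Fintype.card_prod, mul_comm]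
  rw [hdim]
  have hbase : 1 + 2 / δ = 1 + 4 / ε * Real.sqrt (1 / (1 - a)) := by
    rw [one_div, Real.sqrt_inv, hδdef]
    field_simp
    ring
  rw [hbase]
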